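/- General Correspondence Principle (supersolution half): Let X ⊂ ℝⁿ be open and (F, 𝒢) a proper elliptic operator-constraint pair. Define 𝓕 := {(x,J) ∈ 𝒢 : F(x,J) ≥ 0} and assume that 𝓕 is a subequation and that the compatibility condition Int 𝓕 = {(x,J) ∈ 𝒢 : F(x,J) > 0} holds. Then for every u ∈ LSC(X): u is 𝓕-superharmonic on X if and only if u is a 𝒢-admissible supersolution of F(J²u) = 0 on X. -/
import Mathlib


open Set Filter Topology Bornology
open scoped Pointwise

noncomputable section

/-- Euclidean space `ℝⁿ`. -/
abbrev En (n : ℕ) : Type := EuclideanSpace ℝ (Fin n)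

/-- The space `S(n)` of real symmetric `n×n` matrices. -/
abbrev SymMat (n : ℕ) : Type := selfAdjoint (Matrix (Fin n) (Fin n) ℝ)

/-- The (constant coefficient) 2-jet space `J² = ℝ × ℝⁿ × S(n)`. -/
abbrev Jet (n : ℕ) : Type := ℝ × En n × SymMat n

/-- `P ≥ 0`, i.e. `P` is positive semidefinite. -/
def PSD {n : ℕ} (P : SymMat n) : Prop := (P : Matrix (Fin n) (Fin n) ℝ).PosSemidef

/-- The Hessian matrix `D²φ(x)` of `φ` at `x`. -/
def hess {n : ℕ} (φ : En n → ℝ) (x : En n) : Matrix (Fin n) (Fin n) ℝ :=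
  Matrix.of fun i j =>
    iteratedFDeriv ℝ 2 φ x ![EuclideanSpace.single i (1 : ℝ), EuclideanSpace.single j (1 : ℝ)]

/-- `J ∈ J^{2,+}_x u`: `J = (φ(x), Dφ(x), D²φ(x))` for some `C²` function `φ` defined near
`x` (inside `X`) with `u ≤ φ` near `x` and `u(x) = φ(x)`. -/
def IsUpperTestJet {n : ℕ} (X : Set (En n)) (u : En n → EReal) (x : En n) (J : Jet n) : Prop :=
  ∃ φ : En n → ℝ, ∃ V : Set (En n), IsOpen V ∧ x ∈ V ∧ V ⊆ X ∧ ContDiffOn ℝ 2 φ V ∧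
    (∀ y ∈ V, u y ≤ (φ y : EReal)) ∧ u x = (φ x : EReal) ∧
    J.1 = φ x ∧ J.2.1 = gradient φ x ∧ (J.2.2 : Matrix (Fin n) (Fin n) ℝ) = hess φ x

/-- `J ∈ J^{2,-}_x u`: `J = (φ(x), Dφ(x), D²φ(x))` for some `C²` function `φ` defined near
`x` (inside `X`) with `u ≥ φ` near `x` and `u(x) = φ(x)`. -/
def IsLowerTestJet {n : ℕ} (X : Set (En n)) (u : En n → EReal) (x : En n) (J : Jet n) : Prop :=
  ∃ φ : En n → ℝ, ∃ V : Set (En n), IsOpen V ∧ x ∈ V ∧ V ⊆ X ∧ ContDiffOn ℝ 2 φ V ∧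
    (∀ y ∈ V, (φ y : EReal) ≤ u y) ∧ u x = (φ x : EReal) ∧
    J.1 = φ x ∧ J.2.1 = gradient φ x ∧ (J.2.2 : Matrix (Fin n) (Fin n) ℝ) = hess φ x

/-- The fiber `F_x` of a constraint set `F ⊆ J²(X) = X × J²`. -/
def fiber {n : ℕ} (F : Set (En n × Jet n)) (x : En n) : Set (Jet n) := {J | (x, J) ∈ F}

/-- `u ∈ USC(X)`: upper semicontinuous on `X` with values in `[-∞, ∞)`. -/
def USCOn {n : ℕ} (u : En n → EReal) (X : Set (En n)) : Prop :=
  UpperSemicontinuousOn u X ∧ ∀ x ∈ X, u x < ⊤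

/-- `u ∈ LSC(X)`: lower semicontinuous on `X` with values in `(-∞, ∞]`. -/
def LSCOn {n : ℕ} (u : En n → EReal) (X : Set (En n)) : Prop :=
  LowerSemicontinuousOn u X ∧ ∀ x ∈ X, ⊥ < u x

/-- A subequation (constraint set) `F ⊆ X × J²`, i.e. a set satisfying the positivity
property (P), the negativity property (N) and the topological stability conditions (T)
(closures and interiors of `F` being taken relative to `J²(X) = X × J²`). -/
structure IsSubequation {n : ℕ} (X : Set (En n)) (F : Set (En n × Jet n)) : Prop where
  subset : F ⊆ X ×ˢ (univ : Set (Jet n))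
  pos : ∀ x ∈ X, ∀ J ∈ fiber F x, ∀ P : SymMat n, PSD P →
    (J.1, J.2.1, J.2.2 + P) ∈ fiber F x
  neg : ∀ x ∈ X, ∀ J ∈ fiber F x, ∀ s : ℝ, s ≤ 0 →
    (J.1 + s, J.2.1, J.2.2) ∈ fiber F x
  top1 : F = closure (interior F) ∩ (X ×ˢ (univ : Set (Jet n)))
  top2 : ∀ x ∈ X, fiber (interior F) x = interior (fiber F x)
  top3 : ∀ x ∈ X, fiber F x = closure (interior (fiber F x))

/-- `u` is `F`-subharmonic on `X`: all upper test jets lie in the fibers of `F`. -/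
def IsFSubharmonicOn {n : ℕ} (F : Set (En n × Jet n)) (u : En n → EReal)
    (X : Set (En n)) : Prop :=
  ∀ x ∈ X, ∀ J : Jet n, IsUpperTestJet X u x J → J ∈ fiber F x

/-- `w` is `F`-superharmonic on `X`: all lower test jets lie in `(Int (F_x))ᶜ`. -/
def IsFSuperharmonicOn {n : ℕ} (F : Set (En n × Jet n)) (w : En n → EReal)
    (X : Set (En n)) : Prop :=
  ∀ x ∈ X, ∀ J : Jet n, IsLowerTestJet X w x J → J ∉ interior (fiber F x)

/-- A proper elliptic operator-constraint pair `(F, G)`: either `G = J²(X)` (unconstrained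
case) or `G` is a subequation (constrained case); `F` is continuous on `G` and is
degenerate elliptic and proper on the fibers of `G`. -/
structure ProperEllipticPair {n : ℕ} (X : Set (En n)) (G : Set (En n × Jet n))
    (F : En n → Jet n → ℝ) : Prop where
  constraint : G = X ×ˢ (univ : Set (Jet n)) ∨ IsSubequation X G
  cont : ContinuousOn (fun q : En n × Jet n => F q.1 q.2) G
  mono : ∀ x ∈ X, ∀ J ∈ fiber G x, ∀ s : ℝ, s ≤ 0 → ∀ P : SymMat n, PSD P →
    F x J ≤ F x (J.1 + s, J.2.1, J.2.2 + P)

/-- `u` is a `G`-admissible (viscosity) subsolution of `F(J²u) = 0` on `X`. -/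
def AdmissibleSubsolution {n : ℕ} (X : Set (En n)) (G : Set (En n × Jet n))
    (F : En n → Jet n → ℝ) (u : En n → EReal) : Prop :=
  ∀ x ∈ X, ∀ J : Jet n, IsUpperTestJet X u x J → J ∈ fiber G x ∧ 0 ≤ F x J

/-- `u` is a `G`-admissible (viscosity) supersolution of `F(J²u) = 0` on `X`. -/
def AdmissibleSupersolution {n : ℕ} (X : Set (En n)) (G : Set (En n × Jet n))
    (F : En n → Jet n → ℝ) (u : En n → EReal) : Prop :=
  ∀ x ∈ X, ∀ J : Jet n, IsLowerTestJet X u x J →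
    J ∉ fiber G x ∨ (J ∈ fiber G x ∧ F x J ≤ 0)

/-- General Correspondence Principle (supersolution half). -/
theorem statement_1 {n : ℕ} (X : Set (En n)) (hX : IsOpen X)
    (G : Set (En n × Jet n)) (F : En n → Jet n → ℝ)
    (hFG : ProperEllipticPair X G F)
    (Fc : Set (En n × Jet n)) (hFc : Fc = {q ∈ G | 0 ≤ F q.1 q.2})
    (hSub : IsSubequation X Fc)
    (hComp : interior Fc = {q ∈ G | 0 < F q.1 q.2})
    (u : En n → EReal) (hu : LSCOn u X) :
    IsFSuperharmonicOn Fc u X ↔ AdmissibleSupersolution X G F u := by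
  constructor
  · intro h x hx J hJ
    by_cases hG : J ∈ fiber G x
    · by_cases hF : F x J ≤ 0
      · exact Or.inr ⟨hG, hF⟩
      · exfalso
        apply h x hx J hJ
        rw [← hSub.top2 x hx]
        show (x, J) ∈ interior Fc
        rw [hComp]
        exact ⟨hG, lt_of_not_ge hF⟩
    · exact Or.inl hG
  · intro h x hx J hJ hIn
    rw [← hSub.top2 x hx] at hIn
    have hm : (x, J) ∈ interior Fc := hIn
    rw [hComp] at hm
    rcases h x hx J hJ with h1 | ⟨_, h2⟩
    · exact h1 hm.1
    · exact absurd hm.2 (not_lt.mpr h2)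

end
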